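/- Let G be a 2-degenerate loopless multigraph and F : V(G) → finite sets of naturals with |F(v)| < d_G(v)/2 for all v ∈ V(G). Then G admits an F-avoiding orientation. -/
import Mathlib


attribute [local instance] Classical.propDecidable

/-- A loopless multigraph: edges indexed by `E` with endpoints in `Sym2 V`. -/
structure Multigraph (V E : Type) where
  ends : E → Sym2 V
  loopless : ∀ e, ¬ (ends e).IsDiag

namespace Multigraph

variable {V E : Type}

/-- Degree of a vertex: number of edges incident to it. -/
noncomputable def deg [Fintype E] (G : Multigraph V E) (v : V) : ℕ :=
  (Finset.univ.filter fun e => v ∈ G.ends e).card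

/-- Two vertices are adjacent if some edge joins them. -/
def Adj (G : Multigraph V E) (u v : V) : Prop :=
  u ≠ v ∧ ∃ e, G.ends e = s(u, v)

/-- An orientation assigns a tail and head to each edge, consistent with its endpoints. -/
structure Orientation (G : Multigraph V E) where
  tail : E → V
  head : E → V
  consistent : ∀ e, G.ends e = s(tail e, head e)

/-- Out-degree of a vertex in an orientation. -/
noncomputable def Orientation.outDeg [Fintype E] {G : Multigraph V E} (D : G.Orientation)
    (v : V) : ℕ :=
  (Finset.univ.filter fun e => D.tail e = v).card

/-- An orientation is `F`-avoiding if no vertex has out-degree in its forbidden list. -/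
def Orientation.Avoids [Fintype E] {G : Multigraph V E} (D : G.Orientation)
    (F : V → Finset ℕ) : Prop :=
  ∀ v, D.outDeg v ∉ F v

/-- Number of edges with both endpoints in `S`. -/
noncomputable def eIn [Fintype E] (G : Multigraph V E) (S : Finset V) : ℕ :=
  (Finset.univ.filter fun e => ∀ w ∈ G.ends e, w ∈ S).card

/-- Number of edges with exactly one endpoint in `S`. -/
noncomputable def cut [Fintype E] (G : Multigraph V E) (S : Finset V) : ℕ :=
  (Finset.univ.filter fun e => (∃ w ∈ G.ends e, w ∈ S) ∧ ¬ ∀ w ∈ G.ends e, w ∈ S).card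

/-- Reachability by directed paths in an orientation. -/
def Orientation.Reach {G : Multigraph V E} (D : G.Orientation) : V → V → Prop :=
  Relation.ReflTransGen fun a b => ∃ e, D.tail e = a ∧ D.head e = b

end Multigraph


lemma bad1_card (S : Finset ℕ) (h : S.Nonempty) :
    (S.filter fun k => k + 1 ∈ S).card + 1 ≤ S.card := by
  have hsub : (S.filter fun k => k + 1 ∈ S) ⊆ S.erase (S.max' h) := by
    intro k hk
    simp only [Finset.mem_filter] at hk
    refine Finset.mem_erase.2 ⟨?_, hk.1⟩
    intro hkm
    have h2 := S.le_max' (k + 1) hk.2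
    omega
  have h1 := Finset.card_le_card hsub
  have h2 := Finset.card_erase_of_mem (S.max'_mem h)
  rw [h2] at h1
  have h3 : 1 ≤ S.card := Finset.card_pos.2 h
  omega

lemma bad2_card (S : Finset ℕ) (h : 2 ≤ S.card) :
    (S.filter fun k => k + 1 ∈ S ∧ k + 2 ∈ S).card + 2 ≤ S.card := by
  have hne : S.Nonempty := Finset.card_pos.1 (by omega)
  set M := S.max' hne with hM
  have hne' : (S.erase M).Nonempty := by
    rw [← Finset.card_pos, Finset.card_erase_of_mem (S.max'_mem hne)]; omega
  set M' := (S.erase M).max' hne' with hM'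
  have hsub : (S.filter fun k => k + 1 ∈ S ∧ k + 2 ∈ S) ⊆ (S.erase M).erase M' := by
    intro k hk
    simp only [Finset.mem_filter] at hk
    obtain ⟨hk0, hk1, hk2⟩ := hk
    have hle1 := S.le_max' (k + 1) hk1
    have hle2 := S.le_max' (k + 2) hk2
    have hk1' : k + 1 ∈ S.erase M := Finset.mem_erase.2 ⟨by omega, hk1⟩
    have hle1' := (S.erase M).le_max' (k + 1) hk1'
    exact Finset.mem_erase.2 ⟨by omega, Finset.mem_erase.2 ⟨by omega, hk0⟩⟩
  have h1 := Finset.card_le_card hsub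
  have h2 := Finset.card_erase_of_mem ((S.erase M).max'_mem hne')
  have h3 := Finset.card_erase_of_mem (S.max'_mem hne)
  rw [h2, h3] at h1
  omega

lemma bad2_empty (S : Finset ℕ) (h : S.card ≤ 1) :
    (S.filter fun k => k + 1 ∈ S ∧ k + 2 ∈ S) = ∅ := by
  rw [Finset.filter_eq_empty_iff]
  intro k hk hcon
  have : 1 < S.card := Finset.one_lt_card.2 ⟨k, hk, k + 1, hcon.1, by omega⟩
  omega

lemma filter_erase_card {E : Type} (B : Finset E) (e : E) (he : e ∈ B) (p : E → Prop) [DecidablePred p] :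
    (B.filter p).card = ((B.erase e).filter p).card + (if p e then 1 else 0) := by
  conv_lhs => rw [← Finset.insert_erase he]
  rw [Finset.filter_insert]
  split_ifs with h
  · rw [Finset.card_insert_of_notMem
      (fun hc => (Finset.mem_erase.1 (Finset.filter_subset _ _ hc)).1 rfl)]
  · omega


theorem key {V E : Type} [Fintype E] (G : Multigraph V E)
    (a b : E → V) (hab : ∀ e, G.ends e = s(a e, b e))
    (hdegen : ∀ S : Finset V, S.Nonempty → ∃ v ∈ S,
      (Finset.univ.filter fun e => v ∈ G.ends e ∧ ∀ w ∈ G.ends e, w ∈ S).card ≤ 2) :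
    ∀ n (A : Finset E), A.card = n → ∀ F : V → Finset ℕ,
      (∀ v, F v = ∅ ∨ 2 * (F v).card < (A.filter fun e => v ∈ G.ends e).card) →
      ∃ f : E → Bool, ∀ v, (A.filter fun e => (cond (f e) (b e) (a e)) = v).card ∉ F v := by
  have hmemiff : ∀ e w, w ∈ G.ends e ↔ w = a e ∨ w = b e := by
    intro e w; rw [hab e, Sym2.mem_iff]
  have hne_ab : ∀ e, a e ≠ b e := by
    intro e h
    exact G.loopless e (by rw [hab e]; exact Sym2.mk_isDiag_iff.2 h)
  have hdir : ∀ (e : E) (t : V), t ∈ G.ends e →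
      cond (if a e = t then false else true) (b e) (a e) = t := by
    intro e t ht
    by_cases h : a e = t
    · simp [h]
    · simp only [if_neg h, cond_true]
      rcases (hmemiff e t).1 ht with h' | h'
      · exact absurd h'.symm h
      · exact h'.symm
  intro n
  induction n using Nat.strong_induction_on with
  | _ n ih =>
  intro A hA F hcond
  by_cases hAe : A = ∅
  · subst hAe
    refine ⟨fun _ => false, fun v => ?_⟩
    simp only [Finset.filter_empty, Finset.card_empty] at hcond ⊢
    rcases hcond v with h | h
    · simp [h]
    · omega
  have hAne : A.Nonempty := Finset.nonempty_iff_ne_empty.2 hAe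
  obtain ⟨v, hvS, hvdeg⟩ := hdegen (A.image a ∪ A.image b)
    (by obtain ⟨e, he⟩ := hAne
        exact ⟨a e, Finset.mem_union_left _ (Finset.mem_image_of_mem a he)⟩)
  have hdegle : (A.filter fun e => v ∈ G.ends e).card ≤ 2 := by
    refine le_trans (Finset.card_le_card ?_) hvdeg
    intro e he
    simp only [Finset.mem_filter] at he ⊢
    refine ⟨Finset.mem_univ e, he.2, ?_⟩
    intro w hw
    rcases (hmemiff e w).1 hw with h | h
    · subst h; exact Finset.mem_union_left _ (Finset.mem_image_of_mem a he.1)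
    · subst h; exact Finset.mem_union_right _ (Finset.mem_image_of_mem b he.1)
  have hdegge : 1 ≤ (A.filter fun e => v ∈ G.ends e).card := by
    rw [Nat.one_le_iff_ne_zero, Ne, Finset.card_eq_zero, ← Ne,
      ← Finset.nonempty_iff_ne_empty]
    simp only [Finset.mem_union, Finset.mem_image] at hvS
    rcases hvS with ⟨e, he, hv⟩ | ⟨e, he, hv⟩
    · exact ⟨e, Finset.mem_filter.2 ⟨he, (hmemiff e v).2 (Or.inl hv.symm)⟩⟩
    · exact ⟨e, Finset.mem_filter.2 ⟨he, (hmemiff e v).2 (Or.inr hv.symm)⟩⟩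
  have hFv : F v = ∅ := by
    rcases hcond v with h | h
    · exact h
    · rw [← Finset.card_eq_zero]; omega
  set oth : E → V := fun e => if a e = v then b e else a e with hoth
  have hoth3 : ∀ e, v ∈ G.ends e →
      (oth e ∈ G.ends e ∧ oth e ≠ v ∧ ∀ w ∈ G.ends e, w = v ∨ w = oth e) := by
    intro e hv
    by_cases hav : a e = v
    · have ho : oth e = b e := if_pos hav
      refine ⟨?_, ?_, ?_⟩
      · rw [ho]; exact (hmemiff e (b e)).2 (Or.inr rfl)
      · rw [ho, ← hav]; exact fun hc => hne_ab e hc.symm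
      · intro w hw
        rcases (hmemiff e w).1 hw with h | h
        · exact Or.inl (h.trans hav)
        · exact Or.inr (h.trans ho.symm)
    · have hbv : b e = v := by
        rcases (hmemiff e v).1 hv with h | h
        · exact absurd h.symm hav
        · exact h.symm
      have ho : oth e = a e := if_neg hav
      refine ⟨?_, ?_, ?_⟩
      · rw [ho]; exact (hmemiff e (a e)).2 (Or.inl rfl)
      · rw [ho]; exact hav
      · intro w hw
        rcases (hmemiff e w).1 hw with h | h
        · exact Or.inr (h.trans ho.symm)
        · exact Or.inl (h.trans hbv)
  have hcard12 : (A.filter fun e => v ∈ G.ends e).card = 1 ∨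
      (A.filter fun e => v ∈ G.ends e).card = 2 := by omega
  rcases hcard12 with h1 | h2
  · -- CASE: exactly one active edge at v
    obtain ⟨e, hEeq⟩ := Finset.card_eq_one.1 h1
    have heEv : e ∈ A.filter fun e => v ∈ G.ends e := by
      rw [hEeq]; exact Finset.mem_singleton_self e
    have heA : e ∈ A := Finset.filter_subset _ _ heEv
    have hev : v ∈ G.ends e := (Finset.mem_filter.1 heEv).2
    obtain ⟨hum, hune, hall⟩ := hoth3 e hev
    set u := oth e with hu
    set A' := A.erase e with hA'
    set F' := Function.update F u ((F u).filter fun k => k + 1 ∈ F u) with hF'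
    have hcond' : ∀ w, F' w = ∅ ∨
        2 * (F' w).card < (A'.filter fun e' => w ∈ G.ends e').card := by
      intro w
      by_cases hwu : w = u
      · rw [hwu, hF', Function.update_self]
        by_cases hFu : F u = ∅
        · left; simp [hFu]
        · right
          have hFne : (F u).Nonempty := Finset.nonempty_iff_ne_empty.2 hFu
          have hb := bad1_card (F u) hFne
          rcases hcond u with h | h
          · exact absurd h hFu
          · have hd := filter_erase_card A e heA (fun e' => u ∈ G.ends e')
            rw [if_pos hum, ← hA'] at hd
            omega
      · rw [hF', Function.update_of_ne hwu]
        rcases hcond w with h | h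
        · exact Or.inl h
        · by_cases hwv : w = v
          · exact Or.inl (hwv ▸ hFv)
          · right
            have hd := filter_erase_card A e heA (fun e' => w ∈ G.ends e')
            have hne' : ¬ w ∈ G.ends e := fun hc => (hall w hc).elim hwv hwu
            rw [if_neg hne', ← hA'] at hd
            omega
    have hlt : A'.card < n := by
      rw [hA', Finset.card_erase_of_mem heA]
      have hpos : 0 < A.card := Finset.card_pos.2 hAne
      omega
    obtain ⟨f', hf'⟩ := ih A'.card hlt A' rfl F' hcond'
    set k := (A'.filter fun e' => cond (f' e') (b e') (a e') = u).card with hk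
    have hku := hf' u
    rw [hF', Function.update_self] at hku
    set t := if k ∈ F u then u else v with ht
    have htm : t ∈ G.ends e := by
      rw [ht]; split_ifs
      · exact hum
      · exact hev
    set f := Function.update f' e (if a e = t then false else true) with hf
    have htail : cond (f e) (b e) (a e) = t := by
      rw [hf, Function.update_self]; exact hdir e t htm
    have hdecomp : ∀ w, (A.filter fun e' => cond (f e') (b e') (a e') = w).card
        = (A'.filter fun e' => cond (f' e') (b e') (a e') = w).card
          + (if t = w then 1 else 0) := by
      intro w
      rw [filter_erase_card A e heA (fun e' => cond (f e') (b e') (a e') = w), ← hA']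
      congr 1
      · congr 1
        apply Finset.filter_congr
        intro e' he'
        rw [hf, Function.update_of_ne (Finset.mem_erase.1 he').1]
      · simp only [htail]
    refine ⟨f, fun w => ?_⟩
    rw [hdecomp w]
    by_cases hwv : w = v
    · rw [hwv, hFv]; exact Finset.notMem_empty _
    by_cases hwu : w = u
    · rw [hwu, ← hk]
      by_cases hkF : k ∈ F u
      · have htu : t = u := if_pos hkF
        rw [htu, if_pos rfl]
        exact fun hc => hku (Finset.mem_filter.2 ⟨hkF, hc⟩)
      · have htv : t = v := if_neg hkF
        rw [htv, if_neg (fun hc : v = u => hune hc.symm), Nat.add_zero]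
        exact hkF
    · have htw : ¬ t = w := by
        rw [ht]; split_ifs
        · exact fun hc => hwu hc.symm
        · exact fun hc => hwv hc.symm
      rw [if_neg htw, Nat.add_zero]
      have hw := hf' w
      rwa [hF', Function.update_of_ne hwu] at hw
  · -- CASE: exactly two active edges at v
    obtain ⟨e1, e2, he12, hEeq⟩ := Finset.card_eq_two.1 h2
    have h1Ev : e1 ∈ A.filter fun e => v ∈ G.ends e := by rw [hEeq]; simp
    have h2Ev : e2 ∈ A.filter fun e => v ∈ G.ends e := by rw [hEeq]; simp
    have h1A : e1 ∈ A := Finset.filter_subset _ _ h1Ev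
    have h2A : e2 ∈ A := Finset.filter_subset _ _ h2Ev
    have hev1 : v ∈ G.ends e1 := (Finset.mem_filter.1 h1Ev).2
    have hev2 : v ∈ G.ends e2 := (Finset.mem_filter.1 h2Ev).2
    obtain ⟨hu1m, hu1ne, hall1⟩ := hoth3 e1 hev1
    obtain ⟨hu2m, hu2ne, hall2⟩ := hoth3 e2 hev2
    set u1 := oth e1 with hu1
    set u2 := oth e2 with hu2
    have h2A1 : e2 ∈ A.erase e1 := Finset.mem_erase.2 ⟨fun hc => he12 hc.symm, h2A⟩
    set A' := (A.erase e1).erase e2 with hA'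
    have hlt : A'.card < n := by
      rw [hA', Finset.card_erase_of_mem h2A1, Finset.card_erase_of_mem h1A]
      have hpos : 0 < A.card := Finset.card_pos.2 hAne
      omega
    by_cases huu : u2 = u1
    · -- parallel edges to the same neighbor u1
      set F' := Function.update F u1
        ((F u1).filter fun k => k + 1 ∈ F u1 ∧ k + 2 ∈ F u1) with hF'
      have hu2m' : u1 ∈ G.ends e2 := huu ▸ hu2m
      have hall2' : ∀ w ∈ G.ends e2, w = v ∨ w = u1 := fun w hw =>
        (hall2 w hw).imp id (fun h => h.trans huu)
      have hcond' : ∀ w, F' w = ∅ ∨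
          2 * (F' w).card < (A'.filter fun e' => w ∈ G.ends e').card := by
        intro w
        by_cases hwu : w = u1
        · rw [hwu, hF', Function.update_self]
          by_cases hFc : (F u1).card ≤ 1
          · left; exact bad2_empty _ hFc
          · right
            have hb := bad2_card (F u1) (by omega)
            rcases hcond u1 with h | h
            · exfalso; rw [h] at hFc; simp at hFc
            · have hd : (A.filter fun e' => u1 ∈ G.ends e').card
                  = (A'.filter fun e' => u1 ∈ G.ends e').card
                    + (if u1 ∈ G.ends e2 then 1 else 0)
                    + (if u1 ∈ G.ends e1 then 1 else 0) := by
                rw [filter_erase_card A e1 h1A (fun e' => u1 ∈ G.ends e'),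
                  filter_erase_card (A.erase e1) e2 h2A1 (fun e' => u1 ∈ G.ends e'),
                  ← hA']
              rw [if_pos hu2m', if_pos hu1m] at hd
              omega
        · rw [hF', Function.update_of_ne hwu]
          rcases hcond w with h | h
          · exact Or.inl h
          · by_cases hwv : w = v
            · exact Or.inl (hwv ▸ hFv)
            · right
              have hd : (A.filter fun e' => w ∈ G.ends e').card
                  = (A'.filter fun e' => w ∈ G.ends e').card
                    + (if w ∈ G.ends e2 then 1 else 0)
                    + (if w ∈ G.ends e1 then 1 else 0) := by
                rw [filter_erase_card A e1 h1A (fun e' => w ∈ G.ends e'),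
                  filter_erase_card (A.erase e1) e2 h2A1 (fun e' => w ∈ G.ends e'),
                  ← hA']
              rw [if_neg (fun hc => (hall2' w hc).elim hwv hwu),
                if_neg (fun hc => (hall1 w hc).elim hwv hwu)] at hd
              omega
      obtain ⟨f', hf'⟩ := ih A'.card hlt A' rfl F' hcond'
      set k := (A'.filter fun e' => cond (f' e') (b e') (a e') = u1).card with hk
      have hku := hf' u1
      rw [hF', Function.update_self] at hku
      set t1 := if k ∈ F u1 then u1 else v with ht1
      set t2 := if k ∈ F u1 ∧ k + 1 ∈ F u1 then u1 else v with ht2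
      have ht1m : t1 ∈ G.ends e1 := by
        rw [ht1]; split_ifs
        · exact hu1m
        · exact hev1
      have ht2m : t2 ∈ G.ends e2 := by
        rw [ht2]; split_ifs
        · exact hu2m'
        · exact hev2
      set f := Function.update (Function.update f' e2 (if a e2 = t2 then false else true))
        e1 (if a e1 = t1 then false else true) with hf
      have hfe2 : f e2 = (if a e2 = t2 then false else true) := by
        rw [hf, Function.update_of_ne (fun hc => he12 hc.symm), Function.update_self]
      have htail1 : cond (f e1) (b e1) (a e1) = t1 := by
        rw [hf, Function.update_self]; exact hdir e1 t1 ht1m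
      have htail2 : cond (f e2) (b e2) (a e2) = t2 := by
        rw [hfe2]; exact hdir e2 t2 ht2m
      have hfagree : ∀ e' ∈ A', f e' = f' e' := by
        intro e' he'
        have hm2 := Finset.mem_erase.1 he'
        have hm1 := Finset.mem_erase.1 hm2.2
        rw [hf, Function.update_of_ne hm1.1, Function.update_of_ne hm2.1]
      have hdecomp : ∀ w, (A.filter fun e' => cond (f e') (b e') (a e') = w).card
          = (A'.filter fun e' => cond (f' e') (b e') (a e') = w).card
            + (if t2 = w then 1 else 0) + (if t1 = w then 1 else 0) := by
        intro w
        rw [filter_erase_card A e1 h1A (fun e' => cond (f e') (b e') (a e') = w),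
          filter_erase_card (A.erase e1) e2 h2A1 (fun e' => cond (f e') (b e') (a e') = w),
          ← hA']
        congr 1
        · congr 1
          · congr 1
            apply Finset.filter_congr
            intro e' he'
            rw [hfagree e' he']
          · simp only [htail2]
        · simp only [htail1]
      refine ⟨f, fun w => ?_⟩
      rw [hdecomp w]
      by_cases hwv : w = v
      · rw [hwv, hFv]; exact Finset.notMem_empty _
      by_cases hwu : w = u1
      · rw [hwu, ← hk]
        by_cases hk0 : k ∈ F u1
        · by_cases hk1 : k + 1 ∈ F u1
          · rw [show t1 = u1 from if_pos hk0, show t2 = u1 from if_pos ⟨hk0, hk1⟩,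
              if_pos rfl]
            exact fun hc => hku (Finset.mem_filter.2 ⟨hk0, hk1, hc⟩)
          · rw [show t1 = u1 from if_pos hk0,
              show t2 = v from if_neg (fun hc => hk1 hc.2),
              if_neg (fun hc : v = u1 => hu1ne hc.symm), if_pos rfl]
            exact hk1
        · rw [show t1 = v from if_neg hk0, show t2 = v from if_neg (fun hc => hk0 hc.1),
            if_neg (fun hc : v = u1 => hu1ne hc.symm)]
          exact hk0
      · have ht1w : ¬ t1 = w := by
          rw [ht1]; split_ifs
          · exact fun hc => hwu hc.symm
          · exact fun hc => hwv hc.symm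
        have ht2w : ¬ t2 = w := by
          rw [ht2]; split_ifs
          · exact fun hc => hwu hc.symm
          · exact fun hc => hwv hc.symm
        rw [if_neg ht2w, if_neg ht1w]
        have hw := hf' w
        rwa [hF', Function.update_of_ne hwu] at hw
    · -- two distinct neighbors u1 ≠ u2
      set F' := Function.update (Function.update F u1 ((F u1).filter fun k => k + 1 ∈ F u1))
        u2 ((F u2).filter fun k => k + 1 ∈ F u2) with hF'
      have hF'u1 : F' u1 = (F u1).filter fun k => k + 1 ∈ F u1 := by
        rw [hF', Function.update_of_ne (fun hc => huu hc.symm), Function.update_self]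
      have hF'u2 : F' u2 = (F u2).filter fun k => k + 1 ∈ F u2 := by
        rw [hF', Function.update_self]
      have hF'w : ∀ w, ¬ w = u1 → ¬ w = u2 → F' w = F w := by
        intro w hw1 hw2
        rw [hF', Function.update_of_ne hw2, Function.update_of_ne hw1]
      have hcond' : ∀ w, F' w = ∅ ∨
          2 * (F' w).card < (A'.filter fun e' => w ∈ G.ends e').card := by
        intro w
        by_cases hwu2 : w = u2
        · rw [hwu2, hF'u2]
          by_cases hFu : F u2 = ∅
          · left; simp [hFu]
          · right
            have hb := bad1_card (F u2) (Finset.nonempty_iff_ne_empty.2 hFu)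
            rcases hcond u2 with h | h
            · exact absurd h hFu
            · have hd : (A.filter fun e' => u2 ∈ G.ends e').card
                  = (A'.filter fun e' => u2 ∈ G.ends e').card
                    + (if u2 ∈ G.ends e2 then 1 else 0)
                    + (if u2 ∈ G.ends e1 then 1 else 0) := by
                rw [filter_erase_card A e1 h1A (fun e' => u2 ∈ G.ends e'),
                  filter_erase_card (A.erase e1) e2 h2A1 (fun e' => u2 ∈ G.ends e'),
                  ← hA']
              rw [if_pos hu2m,
                if_neg (fun hc => (hall1 u2 hc).elim hu2ne (fun h' => huu h'))] at hd
              omega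
        by_cases hwu1 : w = u1
        · rw [hwu1, hF'u1]
          by_cases hFu : F u1 = ∅
          · left; simp [hFu]
          · right
            have hb := bad1_card (F u1) (Finset.nonempty_iff_ne_empty.2 hFu)
            rcases hcond u1 with h | h
            · exact absurd h hFu
            · have hd : (A.filter fun e' => u1 ∈ G.ends e').card
                  = (A'.filter fun e' => u1 ∈ G.ends e').card
                    + (if u1 ∈ G.ends e2 then 1 else 0)
                    + (if u1 ∈ G.ends e1 then 1 else 0) := by
                rw [filter_erase_card A e1 h1A (fun e' => u1 ∈ G.ends e'),
                  filter_erase_card (A.erase e1) e2 h2A1 (fun e' => u1 ∈ G.ends e'),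
                  ← hA']
              rw [if_pos hu1m,
                if_neg (fun hc => (hall2 u1 hc).elim hu1ne (fun h' => huu h'.symm))] at hd
              omega
        · rw [hF'w w hwu1 hwu2]
          rcases hcond w with h | h
          · exact Or.inl h
          · by_cases hwv : w = v
            · exact Or.inl (hwv ▸ hFv)
            · right
              have hd : (A.filter fun e' => w ∈ G.ends e').card
                  = (A'.filter fun e' => w ∈ G.ends e').card
                    + (if w ∈ G.ends e2 then 1 else 0)
                    + (if w ∈ G.ends e1 then 1 else 0) := by
                rw [filter_erase_card A e1 h1A (fun e' => w ∈ G.ends e'),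
                  filter_erase_card (A.erase e1) e2 h2A1 (fun e' => w ∈ G.ends e'),
                  ← hA']
              rw [if_neg (fun hc => (hall2 w hc).elim hwv hwu2),
                if_neg (fun hc => (hall1 w hc).elim hwv hwu1)] at hd
              omega
      obtain ⟨f', hf'⟩ := ih A'.card hlt A' rfl F' hcond'
      set k1 := (A'.filter fun e' => cond (f' e') (b e') (a e') = u1).card with hk1
      set k2 := (A'.filter fun e' => cond (f' e') (b e') (a e') = u2).card with hk2
      have hku1 := hf' u1
      rw [hF'u1] at hku1
      have hku2 := hf' u2
      rw [hF'u2] at hku2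
      set t1 := if k1 ∈ F u1 then u1 else v with ht1
      set t2 := if k2 ∈ F u2 then u2 else v with ht2
      have ht1m : t1 ∈ G.ends e1 := by
        rw [ht1]; split_ifs
        · exact hu1m
        · exact hev1
      have ht2m : t2 ∈ G.ends e2 := by
        rw [ht2]; split_ifs
        · exact hu2m
        · exact hev2
      set f := Function.update (Function.update f' e2 (if a e2 = t2 then false else true))
        e1 (if a e1 = t1 then false else true) with hf
      have hfe2 : f e2 = (if a e2 = t2 then false else true) := by
        rw [hf, Function.update_of_ne (fun hc => he12 hc.symm), Function.update_self]
      have htail1 : cond (f e1) (b e1) (a e1) = t1 := by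
        rw [hf, Function.update_self]; exact hdir e1 t1 ht1m
      have htail2 : cond (f e2) (b e2) (a e2) = t2 := by
        rw [hfe2]; exact hdir e2 t2 ht2m
      have hfagree : ∀ e' ∈ A', f e' = f' e' := by
        intro e' he'
        have hm2 := Finset.mem_erase.1 he'
        have hm1 := Finset.mem_erase.1 hm2.2
        rw [hf, Function.update_of_ne hm1.1, Function.update_of_ne hm2.1]
      have hdecomp : ∀ w, (A.filter fun e' => cond (f e') (b e') (a e') = w).card
          = (A'.filter fun e' => cond (f' e') (b e') (a e') = w).card
            + (if t2 = w then 1 else 0) + (if t1 = w then 1 else 0) := by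
        intro w
        rw [filter_erase_card A e1 h1A (fun e' => cond (f e') (b e') (a e') = w),
          filter_erase_card (A.erase e1) e2 h2A1 (fun e' => cond (f e') (b e') (a e') = w),
          ← hA']
        congr 1
        · congr 1
          · congr 1
            apply Finset.filter_congr
            intro e' he'
            rw [hfagree e' he']
          · simp only [htail2]
        · simp only [htail1]
      refine ⟨f, fun w => ?_⟩
      rw [hdecomp w]
      by_cases hwv : w = v
      · rw [hwv, hFv]; exact Finset.notMem_empty _
      by_cases hwu1 : w = u1
      · rw [hwu1, ← hk1]
        have ht2w : ¬ t2 = u1 := by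
          rw [ht2]; split_ifs
          · exact huu
          · exact fun hc => hu1ne hc.symm
        rw [if_neg ht2w]
        by_cases hkF : k1 ∈ F u1
        · rw [show t1 = u1 from if_pos hkF, if_pos rfl]
          exact fun hc => hku1 (Finset.mem_filter.2 ⟨hkF, hc⟩)
        · rw [show t1 = v from if_neg hkF,
            if_neg (fun hc : v = u1 => hu1ne hc.symm)]
          exact hkF
      by_cases hwu2 : w = u2
      · rw [hwu2, ← hk2]
        have ht1w : ¬ t1 = u2 := by
          rw [ht1]; split_ifs
          · exact fun hc => huu hc.symm
          · exact fun hc => hu2ne hc.symm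
        rw [if_neg ht1w]
        by_cases hkF : k2 ∈ F u2
        · rw [show t2 = u2 from if_pos hkF, if_pos rfl]
          exact fun hc => hku2 (Finset.mem_filter.2 ⟨hkF, hc⟩)
        · rw [show t2 = v from if_neg hkF,
            if_neg (fun hc : v = u2 => hu2ne hc.symm)]
          exact hkF
      · have ht1w : ¬ t1 = w := by
          rw [ht1]; split_ifs
          · exact fun hc => hwu1 hc.symm
          · exact fun hc => hwv hc.symm
        have ht2w : ¬ t2 = w := by
          rw [ht2]; split_ifs
          · exact fun hc => hwu2 hc.symm
          · exact fun hc => hwv hc.symm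
        rw [if_neg ht2w, if_neg ht1w]
        have hw := hf' w
        rwa [hF'w w hwu1 hwu2] at hw

/-- 2-degenerate multigraphs. -/
theorem stmt4 {V E : Type} [Fintype E] (G : Multigraph V E)
    (hdegen : ∀ S : Finset V, S.Nonempty → ∃ v ∈ S,
      (Finset.univ.filter fun e => v ∈ G.ends e ∧ ∀ w ∈ G.ends e, w ∈ S).card ≤ 2)
    (F : V → Finset ℕ) (hF : ∀ v, 2 * (F v).card < G.deg v) :
    ∃ D : G.Orientation, D.Avoids F := by
  have hex : ∀ e : E, ∃ x y : V, G.ends e = s(x, y) := fun e =>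
    Sym2.ind (f := fun z => ∃ x y : V, z = s(x, y)) (fun x y => ⟨x, y, rfl⟩) (G.ends e)
  choose a b hab using hex
  have hcond : ∀ v, F v = ∅ ∨ 2 * (F v).card <
      (Finset.univ.filter fun e => v ∈ G.ends e).card := fun v => Or.inr (hF v)
  obtain ⟨f, hf⟩ := key G a b hab hdegen Finset.univ.card Finset.univ rfl F hcond
  refine ⟨⟨fun e => cond (f e) (b e) (a e), fun e => cond (f e) (a e) (b e), ?_⟩, ?_⟩
  · intro e
    cases hfe : f e
    · simp only [hfe, cond_false]; exact hab e
    · simp only [hfe, cond_true]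
      rw [hab e]; exact Sym2.eq_swap
  · intro w
    exact hf w
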